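/- Let λ ∈ ℂ* with |λ| > 1, let r ∈ ℂ, and let g : ℍ⁻ → ℂ be holomorphic such that (i-t)^(2-r) g(t) extends holomorphically to a neighbourhood of the closed lower half-plane in the Riemann sphere. Then the one-sided average (A⁺g)(t) := ∑_{n ≥ 0} λ^(-n) g(t + n) converges absolutely on ℍ⁻, defines a holomorphic function there, and satisfies (A⁺g)(t) - λ^(-1)(A⁺g)(t+1) = g(t). -/

import Mathlib

open Complex

/-- For `|λ| > 1` and `g` holomorphic on the lower half-plane such that
`(i-t)^(2-r) g t` extends holomorphically to a neighbourhood of the closed lower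
half-plane in the Riemann sphere (extension `H`, holomorphic and bounded near `∞`),
the one-sided average `(A⁺g)(t) = ∑_{n ≥ 0} λ^(-n) g (t+n)` converges absolutely on
the lower half-plane, is holomorphic there, and satisfies
`(A⁺g)(t) - λ⁻¹ (A⁺g)(t+1) = g t`. -/
theorem one_sided_average_geometric
    (r lam : ℂ) (hlam : 1 < ‖lam‖)
    (g : ℂ → ℂ) (hg : DifferentiableOn ℂ g {t : ℂ | t.im < 0})
    (U : Set ℂ) (hU : IsOpen U) (hUsub : {t : ℂ | t.im ≤ 0} ⊆ U)
    (R : ℝ) (hRU : {t : ℂ | R < ‖t‖} ⊆ U)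
    (H : ℂ → ℂ) (hH : DifferentiableOn ℂ H U)
    (hHbd : ∃ Cb : ℝ, ∀ t : ℂ, R < ‖t‖ → ‖H t‖ ≤ Cb)
    (hHg : ∀ t : ℂ, t.im < 0 → H t = (Complex.I - t) ^ ((2 : ℂ) - r) * g t) :
    (∀ t : ℂ, t.im < 0 → Summable (fun n : ℕ => ‖lam ^ (-(n : ℤ)) * g (t + (n : ℂ))‖)) ∧
    DifferentiableOn ℂ (fun t => ∑' n : ℕ, lam ^ (-(n : ℤ)) * g (t + (n : ℂ)))
      {t : ℂ | t.im < 0} ∧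
    (∀ t : ℂ, t.im < 0 →
      (∑' n : ℕ, lam ^ (-(n : ℤ)) * g (t + (n : ℂ))) -
          lam⁻¹ * ∑' n : ℕ, lam ^ (-(n : ℤ)) * g (t + 1 + (n : ℂ)) = g t) := by
  obtain ⟨Cb, hCb⟩ := hHbd
  obtain ⟨k, hk⟩ := exists_nat_ge (r.re - 2)
  have hlam0 : lam ≠ 0 := by
    intro h; rw [h, norm_zero] at hlam; linarith
  -- bound H on the closed half-plane
  set R' : ℝ := |R| + 1 with hR'
  set K : Set ℂ := {s : ℂ | s.im ≤ 0} ∩ Metric.closedBall 0 R' with hK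
  have hKcompact : IsCompact K :=
    (isCompact_closedBall 0 R').inter_left (isClosed_le Complex.continuous_im continuous_const)
  have hKcont : ContinuousOn H K :=
    hH.continuousOn.mono (fun s hs => hUsub hs.1)
  obtain ⟨C2, hC2⟩ := hKcompact.exists_bound_of_continuousOn hKcont
  set CH : ℝ := max C2 Cb with hCHdef
  have hCH : ∀ s : ℂ, s.im ≤ 0 → ‖H s‖ ≤ CH := by
    intro s hs
    by_cases hsR : ‖s‖ ≤ R'
    · exact le_trans (hC2 s ⟨hs, by simpa [Metric.mem_closedBall, dist_zero_right] using hsR⟩)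
        (le_max_left _ _)
    · refine le_trans (hCb s ?_) (le_max_right _ _)
      have : R ≤ |R| := le_abs_self R
      push_neg at hsR
      linarith
  have hCH0 : 0 ≤ CH := le_trans (norm_nonneg _) (hCH (-Complex.I) (by simp))
  set C : ℝ := CH * Real.exp (Real.pi * |r.im|) with hCdef
  have hC0 : 0 ≤ C := mul_nonneg hCH0 (Real.exp_pos _).le
  -- pointwise bound on g
  have hgbound : ∀ s : ℂ, s.im < 0 → ‖g s‖ ≤ C * ‖Complex.I - s‖ ^ k := by
    intro s hs
    set z : ℂ := Complex.I - s with hz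
    have hzim : 1 ≤ z.im := by simp [hz]; linarith
    have hz1 : 1 ≤ ‖z‖ :=
      le_trans (le_trans hzim (le_abs_self _)) (Complex.abs_im_le_norm z)
    have hz0 : z ≠ 0 := by
      intro h; rw [h] at hzim; simp at hzim; linarith
    have hgs : g s = z ^ (r - 2) * H s := by
      rw [hHg s hs, ← mul_assoc, ← Complex.cpow_add _ _ hz0]
      have : (r - 2) + ((2 : ℂ) - r) = 0 := by ring
      rw [this, Complex.cpow_zero, one_mul]
    have habs : ‖z ^ (r - 2)‖ ≤ ‖z‖ ^ k * Real.exp (Real.pi * |r.im|) := by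
      rw [Complex.norm_cpow_of_ne_zero hz0]
      have him : (r - 2).im = r.im := by simp
      have hre : (r - 2).re = r.re - 2 := by simp
      rw [him, hre, div_le_iff₀ (Real.exp_pos _)]
      have h1 : ‖z‖ ^ (r.re - 2) ≤ ‖z‖ ^ (k : ℝ) :=
        Real.rpow_le_rpow_of_exponent_le hz1 (by exact_mod_cast hk)
      have h2 : ‖z‖ ^ (k : ℝ) = ‖z‖ ^ k := Real.rpow_natCast _ k
      have h3 : (1 : ℝ) ≤ Real.exp (Real.pi * |r.im|) * Real.exp (z.arg * r.im) := by
        rw [← Real.exp_add, ← Real.exp_zero]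
        apply Real.exp_le_exp.mpr
        have h4 : |z.arg * r.im| ≤ Real.pi * |r.im| := by
          rw [abs_mul]
          exact mul_le_mul_of_nonneg_right (Complex.abs_arg_le_pi z) (abs_nonneg _)
        have := neg_abs_le (z.arg * r.im)
        linarith
      calc ‖z‖ ^ (r.re - 2) ≤ ‖z‖ ^ k := h1.trans_eq h2
        _ ≤ (‖z‖ ^ k * Real.exp (Real.pi * |r.im|)) * Real.exp (z.arg * r.im) := by
            nlinarith [pow_nonneg (le_trans zero_le_one hz1) k, h3]
    calc ‖g s‖ = ‖z ^ (r - 2)‖ * ‖H s‖ := by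
          rw [hgs]; simp [norm_mul]
      _ ≤ (‖z‖ ^ k * Real.exp (Real.pi * |r.im|)) * CH := by
          apply mul_le_mul habs (hCH s hs.le) (norm_nonneg _)
          positivity
      _ = C * ‖z‖ ^ k := by rw [hCdef]; ring
  -- geometric-polynomial majorant
  set q : ℝ := ‖lam‖⁻¹ with hq
  have hq0 : 0 ≤ q := inv_nonneg.mpr (norm_nonneg _)
  have hq1 : q < 1 := by
    rw [hq, inv_lt_one_iff₀]; right; exact hlam
  have hqne : q ≠ 0 := by
    rw [hq]; exact inv_ne_zero (by positivity)
  have hS0 : Summable fun n : ℕ => (n : ℝ) ^ k * q ^ n :=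
    summable_pow_mul_geometric_of_norm_lt_one k (by rwa [Real.norm_of_nonneg hq0])
  have hS1 : Summable fun n : ℕ => ((n : ℝ) + 1) ^ k * q ^ n := by
    have h1 : Summable fun n : ℕ => ((n + 1 : ℕ) : ℝ) ^ k * q ^ (n + 1) :=
      (summable_nat_add_iff (f := fun n : ℕ => (n : ℝ) ^ k * q ^ n) 1).mpr hS0
    have h2 := h1.mul_right q⁻¹
    refine h2.congr fun n => ?_
    push_cast
    rw [pow_succ, ← mul_assoc, mul_inv_cancel_right₀ hqne]
  -- per-point term bound
  have hterm : ∀ t : ℂ, t.im < 0 → ∀ n : ℕ,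
      ‖lam ^ (-(n : ℤ)) * g (t + (n : ℂ))‖ ≤
        (C * (‖Complex.I - t‖ + 1) ^ k) * (((n : ℝ) + 1) ^ k * q ^ n) := by
    intro t ht n
    have htn : (t + (n : ℂ)).im < 0 := by simpa using ht
    have h1 : ‖lam ^ (-(n : ℤ)) * g (t + (n : ℂ))‖ = q ^ n * ‖g (t + (n : ℂ))‖ := by
      rw [norm_mul, norm_zpow, zpow_neg, zpow_natCast, hq, inv_pow]
    have h2 : ‖Complex.I - (t + (n : ℂ))‖ ≤
        (‖Complex.I - t‖ + 1) * ((n : ℝ) + 1) := by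
      have : Complex.I - (t + (n : ℂ)) = (Complex.I - t) + (-(n : ℂ)) := by ring
      rw [this]
      refine le_trans (norm_add_le _ _) ?_
      rw [norm_neg, Complex.norm_natCast]
      nlinarith [norm_nonneg (Complex.I - t), Nat.cast_nonneg (α := ℝ) n]
    have h3 : ‖g (t + (n : ℂ))‖ ≤ C * ((‖Complex.I - t‖ + 1) ^ k * ((n : ℝ) + 1) ^ k) := by
      refine le_trans (hgbound _ htn) ?_
      rw [← mul_pow]
      exact mul_le_mul_of_nonneg_left (pow_le_pow_left₀ (norm_nonneg _) h2 k) hC0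
    rw [h1]
    calc q ^ n * ‖g (t + (n : ℂ))‖
        ≤ q ^ n * (C * ((‖Complex.I - t‖ + 1) ^ k * ((n : ℝ) + 1) ^ k)) :=
          mul_le_mul_of_nonneg_left h3 (pow_nonneg hq0 n)
      _ = (C * (‖Complex.I - t‖ + 1) ^ k) * (((n : ℝ) + 1) ^ k * q ^ n) := by ring
  have hsum : ∀ t : ℂ, t.im < 0 → Summable (fun n : ℕ => ‖lam ^ (-(n : ℤ)) * g (t + (n : ℂ))‖) := by
    intro t ht
    exact Summable.of_nonneg_of_le (fun n => norm_nonneg _) (hterm t ht)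
      (hS1.mul_left _)
  refine ⟨hsum, ?_, ?_⟩
  · -- differentiability
    intro t0 ht0
    have ht0' : t0.im < 0 := ht0
    set ε : ℝ := -t0.im / 2 with hεdef
    have hε0 : 0 < ε := by simp only [hεdef]; linarith
    have hball : Metric.ball t0 ε ⊆ {t : ℂ | t.im < 0} := by
      intro w hw
      rw [Metric.mem_ball, Complex.dist_eq] at hw
      have h1 : |(w - t0).im| ≤ ‖w - t0‖ := Complex.abs_im_le_norm _
      have h2 : (w - t0).im = w.im - t0.im := by simp
      have := abs_le.mp (h1.trans hw.le) |>.2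
      simp only [Set.mem_setOf_eq]
      rw [h2] at this
      simp only [hεdef] at this
      linarith
    have key : DifferentiableOn ℂ (fun t => ∑' n : ℕ, lam ^ (-(n : ℤ)) * g (t + (n : ℂ)))
        (Metric.ball t0 ε) := by
      apply differentiableOn_tsum_of_summable_norm
        (u := fun n : ℕ => (C * (‖Complex.I - t0‖ + ε + 1) ^ k) *
          (((n : ℝ) + 1) ^ k * q ^ n))
        (hS1.mul_left _)
      · intro n
        apply DifferentiableOn.const_mul
        apply hg.comp
        · exact (differentiable_id.add_const _).differentiableOn
        · intro w hw
          have := hball hw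
          simpa using this
      · exact Metric.isOpen_ball
      · intro n w hw
        refine le_trans (hterm w (hball hw) n) ?_
        apply mul_le_mul_of_nonneg_right _ (by positivity)
        apply mul_le_mul_of_nonneg_left _ hC0
        apply pow_le_pow_left₀ (by positivity)
        have : ‖Complex.I - w‖ ≤ ‖Complex.I - t0‖ + ε := by
          have h1 : Complex.I - w = (Complex.I - t0) + (t0 - w) := by ring
          rw [h1]
          refine le_trans (norm_add_le _ _) ?_
          have h2 : ‖t0 - w‖ < ε := by
            rw [Metric.mem_ball, Complex.dist_eq] at hw
            rwa [← norm_neg, neg_sub]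
          linarith
        linarith
    exact ((key t0 (Metric.mem_ball_self hε0)).differentiableAt
      (Metric.isOpen_ball.mem_nhds (Metric.mem_ball_self hε0))).differentiableWithinAt
  · -- the functional equation
    intro t ht
    have hsum_t : Summable (fun n : ℕ => lam ^ (-(n : ℤ)) * g (t + (n : ℂ))) :=
      (hsum t ht).of_norm
    have hshift : ∀ n : ℕ, lam ^ (-((n + 1 : ℕ) : ℤ)) * g (t + ((n + 1 : ℕ) : ℂ)) =
        lam⁻¹ * (lam ^ (-(n : ℤ)) * g (t + 1 + (n : ℂ))) := by
      intro n
      have h1 : (-((n + 1 : ℕ) : ℤ)) = (-1) + (-(n : ℤ)) := by push_cast; ring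
      have h2 : (t + ((n + 1 : ℕ) : ℂ)) = t + 1 + (n : ℂ) := by push_cast; ring
      rw [h1, zpow_add₀ hlam0, zpow_neg_one, h2]
      ring
    have e1 : (∑' n : ℕ, lam ^ (-(n : ℤ)) * g (t + (n : ℂ))) =
        g t + lam⁻¹ * ∑' n : ℕ, lam ^ (-(n : ℤ)) * g (t + 1 + (n : ℂ)) := by
      rw [hsum_t.tsum_eq_zero_add]
      congr 1
      · simp
      · rw [← tsum_mul_left]
        exact tsum_congr hshift
    rw [e1]; ring
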